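/- arXiv:2202.05611 — 3 statements merged into one kernel-verified Lean document; each statement's English description precedes it below -/
import Mathlib

section
/- Let X be a well-order and let α be a well-order with a least element 0_α. Then the exponentiation α^X, ordered lexicographically, is again a well-order; in particular, there is no infinite strictly descending sequence in α^X. -/
variable {X α : Type*}

/-- The lexicographic order on `α^X` (finite sequences of pairs):
`σ < τ` iff `τ` strictly extends `σ`, or at the least index `i` where they differ,
writing `(b, a) := σ_i` and `(b', a') := τ_i`, we have `b < b'` or (`b = b'` and `a < a'`). -/
def ExpLt [LT X] [LT α] (σ τ : List (X × α)) : Prop :=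
  (σ ≠ τ ∧ σ <+: τ) ∨
  ∃ (i : ℕ) (b : X) (a : α) (b' : X) (a' : α),
    σ[i]? = some (b, a) ∧ τ[i]? = some (b', a') ∧
    (∀ j, j < i → σ[j]? = τ[j]?) ∧ (b, a) ≠ (b', a') ∧
    (b < b' ∨ (b = b' ∧ a < a'))

/-- The underlying set of the exponentiation `α^X`: finite sequences
`⟨(b_0, a_0), …, (b_{n-1}, a_{n-1})⟩` with all `a_i ≠ 0_α = ⊥` and
`b_0 >_X b_1 >_X … >_X b_{n-1}`. -/
def ExpSet (X α : Type*) [LT X] [LE α] [OrderBot α] : Set (List (X × α)) :=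
  {l | (∀ p ∈ l, p.2 ≠ ⊥) ∧ l.Chain' (fun p q => q.1 < p.1)}

/-- Auxiliary: the finsupp associated to a list of (exponent, coefficient) pairs. -/
noncomputable def ExpToF [Zero α] : List (X × α) → (X →₀ α)
  | [] => 0
  | p :: l => (ExpToF l).update p.1 p.2

theorem expToF_cons_apply [DecidableEq X] [Zero α] (p : X × α) (l : List (X × α)) (c : X) :
    ExpToF (p :: l) c = if c = p.1 then p.2 else ExpToF l c := by
  rw [ExpToF, Finsupp.coe_update, Function.update_apply]

theorem expToF_not_mem [DecidableEq X] [Zero α] {l : List (X × α)} {c : X}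
    (h : c ∉ l.map Prod.fst) : ExpToF l c = 0 := by
  induction l with
  | nil => rfl
  | cons p l ih =>
    simp only [List.map_cons, List.mem_cons, not_or] at h
    rw [expToF_cons_apply, if_neg h.1, ih h.2]

theorem expLt_toLex [LinearOrder X] [LinearOrder α] {σ τ : List (X × α)}
    (h : ExpLt σ τ) : List.Lex (Prod.Lex (· < ·) (· < ·)) σ τ := by
  rcases h with ⟨hne, hpre⟩ | ⟨i, b, a, b', a', h1, h2, h3, _, h5⟩
  · obtain ⟨ρ, rfl⟩ := hpre
    cases ρ with
    | nil => simp at hne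
    | cons q ρ =>
      clear hne
      induction σ with
      | nil => exact List.Lex.nil
      | cons p s ih => exact List.Lex.cons ih
  · induction i generalizing σ τ with
    | zero =>
      match σ, τ with
      | p :: s, q :: t =>
        simp only [List.getElem?_cons_zero, Option.some_inj] at h1 h2
        subst h1; subst h2
        rcases h5 with h | ⟨rfl, h⟩
        · exact List.Lex.rel (Prod.Lex.left _ _ h)
        · exact List.Lex.rel (Prod.Lex.right _ h)
      | [], _ => simp at h1
      | _ :: _, [] => simp at h2
    | succ n ih =>
      match σ, τ with
      | p :: s, q :: t =>
        have h0 := h3 0 (Nat.succ_pos n)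
        simp only [List.getElem?_cons_zero, Option.some_inj] at h0
        subst h0
        simp only [List.getElem?_cons_succ] at h1 h2
        exact List.Lex.cons (ih h1 h2 fun j hj => by
          have := h3 (j + 1) (by omega)
          simpa using this)
      | [], _ => simp at h1
      | _ :: _, [] => simp at h2

theorem exp_key [LinearOrder X] [LinearOrder α] [Zero α] (h0 : ∀ a : α, ¬ a < 0)
    {σ τ : List (X × α)}
    (hσ0 : ∀ p ∈ σ, p.2 ≠ 0) (hτ0 : ∀ p ∈ τ, p.2 ≠ 0)
    (hσc : σ.Pairwise (fun p q => q.1 < p.1)) (hτc : τ.Pairwise (fun p q => q.1 < p.1))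
    (h : List.Lex (Prod.Lex (· < ·) (· < ·)) σ τ) :
    ∃ b, b ∈ τ.map Prod.fst ∧ (∀ c, b < c → ExpToF σ c = ExpToF τ c) ∧
      ExpToF σ b < ExpToF τ b := by
  classical
  induction h with
  | nil =>
    rename_i q t
    refine ⟨q.1, by simp, fun c hc => ?_, ?_⟩
    · have hz : ExpToF (q :: t) c = 0 := by
        apply expToF_not_mem
        simp only [List.map_cons, List.mem_cons, not_or]
        refine ⟨hc.ne', fun hm => ?_⟩
        obtain ⟨x, hx, hxc⟩ := List.mem_map.mp hm
        have := (List.pairwise_cons.mp hτc).1 x hx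
        rw [hxc] at this
        exact absurd this (not_lt.mpr hc.le)
      rw [hz]; rfl
    · rw [expToF_cons_apply, if_pos rfl]
      show ExpToF ([] : List (X × α)) q.1 < q.2
      have hz : ExpToF ([] : List (X × α)) q.1 = 0 := rfl
      rw [hz]
      exact lt_of_le_of_ne (not_lt.mp (h0 _)) (Ne.symm (hτ0 q List.mem_cons_self))
  | cons hst ih =>
    rename_i p s t
    obtain ⟨b, hbmem, heq, hlt⟩ := ih (fun x hx => hσ0 x (List.mem_cons_of_mem _ hx))
      (fun x hx => hτ0 x (List.mem_cons_of_mem _ hx))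
      (List.pairwise_cons.mp hσc).2 (List.pairwise_cons.mp hτc).2
    obtain ⟨q, hq, rfl⟩ := List.mem_map.mp hbmem
    have hbp : q.1 < p.1 := (List.pairwise_cons.mp hτc).1 q hq
    refine ⟨q.1, (by
        simp only [List.map_cons, List.mem_cons]
        exact Or.inr (List.mem_map.mpr ⟨q, hq, rfl⟩)), fun c hc => ?_, ?_⟩
    · rw [expToF_cons_apply, expToF_cons_apply]
      split_ifs with hcp
      · rfl
      · exact heq c hc
    · rw [expToF_cons_apply, expToF_cons_apply, if_neg hbp.ne, if_neg hbp.ne]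
      exact hlt
  | rel hpq =>
    rename_i p s q t
    have hs_lt : ∀ x ∈ s, x.1 < p.1 := (List.pairwise_cons.mp hσc).1
    have ht_lt : ∀ x ∈ t, x.1 < q.1 := (List.pairwise_cons.mp hτc).1
    rcases Prod.lex_iff.mp hpq with hbb | ⟨hfst, haa⟩
    · -- first components: p.1 < q.1
      refine ⟨q.1, by simp, fun c hc => ?_, ?_⟩
      · have hl : ExpToF (p :: s) c = 0 := by
          apply expToF_not_mem
          simp only [List.map_cons, List.mem_cons, not_or]
          refine ⟨(hbb.trans hc).ne', fun hm => ?_⟩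
          obtain ⟨x, hx, hxc⟩ := List.mem_map.mp hm
          have := hs_lt x hx
          rw [hxc] at this
          exact absurd this (not_lt.mpr (hbb.trans hc).le)
        have hr : ExpToF (q :: t) c = 0 := by
          apply expToF_not_mem
          simp only [List.map_cons, List.mem_cons, not_or]
          refine ⟨hc.ne', fun hm => ?_⟩
          obtain ⟨x, hx, hxc⟩ := List.mem_map.mp hm
          have := ht_lt x hx
          rw [hxc] at this
          exact absurd this (not_lt.mpr hc.le)
        rw [hl, hr]
      · rw [expToF_cons_apply, expToF_cons_apply, if_neg hbb.ne', if_pos rfl]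
        have hz : ExpToF s q.1 = 0 := by
          apply expToF_not_mem
          intro hm
          obtain ⟨x, hx, hxc⟩ := List.mem_map.mp hm
          have := (hs_lt x hx).trans hbb
          rw [hxc] at this
          exact absurd this (lt_irrefl _)
        rw [hz]
        exact lt_of_le_of_ne (not_lt.mp (h0 _))
          (Ne.symm (hτ0 _ List.mem_cons_self))
    · -- second components: same first, p.2 < q.2
      refine ⟨q.1, by simp, fun c hc => ?_, ?_⟩
      · rw [expToF_cons_apply, expToF_cons_apply, if_neg (hfst ▸ hc.ne'), if_neg hc.ne']
        have hl : ExpToF s c = 0 := by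
          apply expToF_not_mem
          intro hm
          obtain ⟨x, hx, hxc⟩ := List.mem_map.mp hm
          have := hs_lt x hx
          rw [hxc, hfst] at this
          exact absurd this (not_lt.mpr hc.le)
        have hr : ExpToF t c = 0 := by
          apply expToF_not_mem
          intro hm
          obtain ⟨x, hx, hxc⟩ := List.mem_map.mp hm
          have := ht_lt x hx
          rw [hxc] at this
          exact absurd this (not_lt.mpr hc.le)
        rw [hl, hr]
      · rw [expToF_cons_apply, expToF_cons_apply, if_pos hfst.symm, if_pos rfl]
        exact haa

/-- If `X` is a well-order and `α` is a well-order with a least element, then `α^X`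
with the lexicographic order is well-founded; in particular, there is no infinite
strictly descending sequence in `α^X`. -/
theorem expWellOrder [LinearOrder X] [WellFoundedLT X]
    [LinearOrder α] [OrderBot α] [WellFoundedLT α] :
    WellFounded (fun σ τ : ExpSet X α => ExpLt σ.1 τ.1) ∧
    ¬ ∃ f : ℕ → ExpSet X α, ∀ n, ExpLt (f (n + 1)).1 (f n).1 := by
  letI : Zero α := ⟨⊥⟩
  have h0 : ∀ a : α, ¬ a < 0 := fun a => not_lt_bot
  have hr : WellFounded (((· > ·) : X → X → Prop)ᶜ ⊓ (· ≠ ·)) :=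
    Subrelation.wf (fun {a b} h => lt_of_le_of_ne (not_lt.mp h.1) h.2)
      (wellFounded_lt (α := X))
  have hwfF : WellFounded
      (Finsupp.Lex ((· > ·) : X → X → Prop) ((· < ·) : α → α → Prop)) :=
    Finsupp.Lex.wellFounded (fun n => h0 n) (wellFounded_lt (α := α)) hr
  haveI : IsTrans (X × α) (fun p q : X × α => q.1 < p.1) :=
    ⟨fun _ _ _ h1 h2 => h2.trans h1⟩
  have key : ∀ (σ τ : ExpSet X α), ExpLt σ.1 τ.1 →
      Finsupp.Lex ((· > ·) : X → X → Prop) ((· < ·) : α → α → Prop)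
        (ExpToF σ.1) (ExpToF τ.1) := by
    intro σ τ h
    obtain ⟨b, _, heq, hlt⟩ := exp_key h0 σ.2.1 τ.2.1
      (List.isChain_iff_pairwise.mp σ.2.2) (List.isChain_iff_pairwise.mp τ.2.2)
      (expLt_toLex h)
    exact ⟨b, fun d hd => heq d hd, hlt⟩
  have wf : WellFounded (fun σ τ : ExpSet X α => ExpLt σ.1 τ.1) :=
    Subrelation.wf (fun {σ τ} h => key σ τ h)
      (InvImage.wf (fun σ : ExpSet X α => ExpToF σ.1) hwfF)
  refine ⟨wf, ?_⟩
  rintro ⟨f, hf⟩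
  have main : ∀ σ : ExpSet X α, ∀ n, σ = f n → False := by
    intro σ
    induction wf.apply σ with
    | intro x _ ih =>
      rintro n rfl
      exact ih (f (n + 1)) (hf n) (n + 1) rfl
  exact main (f 0) 0 rfl
end

section
/- Let X be a well-order, let α be a well-order with least element 0_α, and let (f_n) be a strictly descending sequence in α^X. Then f_0 is a nonempty sequence, and if x ∈ X denotes the greatest element of X with f_0(x) ≠ 0_α, then f_n(y) = 0_α for every n ∈ ℕ and every y ∈ X with y >_X x, and the set {f_n^x : n ∈ ℕ} is finite. -/
variable {X α : Type*}

/-- The non-strict order on `α^X`: `σ ≤ τ` iff `σ < τ` or `σ = τ`. -/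
def ExpLe [LT X] [LT α] (σ τ : List (X × α)) : Prop :=
  ExpLt σ τ ∨ σ = τ

/-- `g^x`: the sequence obtained from `g` by removing all pairs `(y, a)` with `y <_X x`. -/
def restrictAbove [LinearOrder X] (x : X) (g : List (X × α)) : List (X × α) :=
  g.filter (fun p => decide (¬ p.1 < x))

/-- `g(x)`: the unique `a` with `(x, a) ∈ g` if it exists, and `0_α = ⊥` otherwise. -/
def eval [LinearOrder X] [LE α] [OrderBot α] (g : List (X × α)) (x : X) : α :=
  ((g.find? (fun p => decide (p.1 = x))).map Prod.snd).getD ⊥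

lemma expLt_nil [LT X] [LT α] {σ : List (X × α)} (h : ExpLt σ []) : False := by
  rcases h with ⟨hne, hpre⟩ | ⟨i, b, a, b', a', h1, h2, _⟩
  · exact hne (List.prefix_nil.mp hpre)
  · simp at h2

lemma expLt_head [LT X] [LT α] {σ τ : List (X × α)} (h : ExpLt σ τ)
    {p q : X × α} (hp : σ[0]? = some p) (hq : τ[0]? = some q) :
    p = q ∨ p.1 < q.1 ∨ (p.1 = q.1 ∧ p.2 < q.2) := by
  rcases h with ⟨_, hpre⟩ | ⟨i, b, a, b', a', h1, h2, hagree, hne, hlt⟩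
  · left
    obtain ⟨t, rfl⟩ := hpre
    rw [List.getElem?_append_left (by
      rcases List.getElem?_eq_some_iff.mp hp with ⟨hl, _⟩; exact hl)] at hq
    exact Option.some_inj.mp (hp.symm.trans hq)
  · rcases Nat.eq_zero_or_pos i with rfl | hi
    · rw [hp, Option.some_inj] at h1
      rw [hq, Option.some_inj] at h2
      subst h1; subst h2
      rcases hlt with h | ⟨h, h'⟩
      · exact Or.inr (Or.inl h)
      · exact Or.inr (Or.inr ⟨h, h'⟩)
    · left
      have := hagree 0 hi
      rw [hp, hq] at this
      injection this

instance instTransSnd [Preorder X] : IsTrans (X × α) (fun p q : X × α => q.1 < p.1) :=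
  ⟨fun _ _ _ h1 h2 => lt_trans h2 h1⟩

lemma head_max [Preorder X] {l : List (X × α)} (hl : l.Chain' (fun p q : X × α => q.1 < p.1))
    {h : X × α} (hh : l[0]? = some h) : ∀ p ∈ l, p.1 ≤ h.1 := by
  cases l with
  | nil => simp at hh
  | cons a t =>
    obtain rfl : a = h := by simpa using hh
    have hpw := List.pairwise_cons.mp hl.pairwise
    intro p hp
    rcases List.mem_cons.mp hp with rfl | hp
    · exact le_refl _
    · exact le_of_lt (hpw.1 p hp)

lemma eval_ne_bot_of_mem [LinearOrder X] [LE α] [OrderBot α] {l : List (X × α)}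
    (h : ∀ p ∈ l, p.2 ≠ ⊥) {p : X × α} (hp : p ∈ l) : eval l p.1 ≠ ⊥ := by
  unfold eval
  cases hfind : l.find? (fun q => decide (q.1 = p.1)) with
  | none =>
    have := List.find?_eq_none.mp hfind p hp
    simp at this
  | some q =>
    simpa using h q (List.mem_of_find?_eq_some hfind)

lemma eval_eq_bot [LinearOrder X] [LE α] [OrderBot α] {l : List (X × α)} {y : X}
    (h : ∀ p ∈ l, p.1 ≠ y) : eval l y = ⊥ := by
  unfold eval
  rw [List.find?_eq_none.mpr (fun p hp => by simpa using h p hp)]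
  rfl

/-- structure lemma -/
lemma exp_struct [LinearOrder X] [LinearOrder α] [OrderBot α]
    {l : List (X × α)} (hl : l ∈ ExpSet X α) {x : X} (hx : ∀ p ∈ l, p.1 ≤ x) :
    (eval l x = ⊥ ∧ restrictAbove x l = [] ∧ ∀ p ∈ l, p.1 < x) ∨
    (∃ t, l = (x, eval l x) :: t ∧ eval l x ≠ ⊥ ∧
      restrictAbove x l = [(x, eval l x)]) := by
  obtain ⟨hbot, hchain⟩ := hl
  cases l with
  | nil =>
    left
    refine ⟨?_, rfl, by simp⟩
    unfold eval; rfl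
  | cons h t =>
    have htail : ∀ p ∈ t, p.1 < h.1 := (List.pairwise_cons.mp hchain.pairwise).1
    rcases lt_or_eq_of_le (hx h List.mem_cons_self) with hlt | heq
    · left
      have hall : ∀ p ∈ h :: t, p.1 < x := by
        intro p hp
        rcases List.mem_cons.mp hp with rfl | hp
        · exact hlt
        · exact lt_trans (htail p hp) hlt
      refine ⟨eval_eq_bot (fun p hp => ne_of_lt (hall p hp)), ?_, hall⟩
      unfold restrictAbove
      rw [List.filter_eq_nil_iff]
      intro p hp
      simpa using hall p hp
    · right
      have heval : eval (h :: t) x = h.2 := by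
        unfold eval
        rw [List.find?_cons_of_pos (by simpa using heq)]
        rfl
      refine ⟨t, ?_, ?_, ?_⟩
      · rw [heval, ← heq]
      · rw [heval]; exact hbot h List.mem_cons_self
      · rw [heval]
        unfold restrictAbove
        rw [List.filter_cons_of_pos (by simp [heq])]
        rw [List.filter_eq_nil_iff.mpr (fun p hp => by
          simpa using lt_of_lt_of_le (htail p hp) (le_of_eq heq))]
        simp [← heq]


/-- For a strictly descending sequence `(f_n)` in `α^X` (with `α` a well-order with
least element `⊥`): `f 0` is nonempty, and if `x` is the greatest element of `X` with
`(f 0)(x) ≠ ⊥`, then `(f n)(y) = ⊥` for all `n` and all `y >_X x`, and the set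
`{f_n^x : n ∈ ℕ}` is finite. -/
theorem greatest_coordinate [LinearOrder X] [WellFoundedLT X]
    [LinearOrder α] [OrderBot α] [WellFoundedLT α]
    (f : ℕ → List (X × α)) (hf : ∀ n, f n ∈ ExpSet X α)
    (hdesc : ∀ n, ExpLt (f (n + 1)) (f n)) :
    f 0 ≠ [] ∧
    ∀ x : X, eval (f 0) x ≠ ⊥ → (∀ y : X, eval (f 0) y ≠ ⊥ → y ≤ x) →
      (∀ (n : ℕ) (y : X), x < y → eval (f n) y = ⊥) ∧
      (Set.range fun n => restrictAbove x (f n)).Finite := by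
  have hne : ∀ n, f n ≠ [] := by
    intro n hn
    exact expLt_nil (hn ▸ hdesc n)
  have hget : ∀ n, ∃ h, (f n)[0]? = some h := by
    intro n
    cases hc : f n with
    | nil => exact absurd hc (hne n)
    | cons a t => exact ⟨a, by simp [hc]⟩
  refine ⟨hne 0, ?_⟩
  intro x hx hmax
  -- all coordinates ≤ x
  have hcoord : ∀ n, ∀ p ∈ f n, p.1 ≤ x := by
    intro n
    induction n with
    | zero =>
      intro p hp
      exact hmax p.1 (eval_ne_bot_of_mem (hf 0).1 hp)
    | succ n ih =>
      intro p hp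
      obtain ⟨h, hh⟩ := hget (n + 1)
      obtain ⟨h', hh'⟩ := hget n
      have hhx : h.1 ≤ h'.1 := by
        rcases expLt_head (hdesc n) hh hh' with rfl | hlt | ⟨heq, _⟩
        · exact le_refl _
        · exact le_of_lt hlt
        · exact le_of_eq heq
      have hmem : h' ∈ f n := List.mem_of_getElem? hh'
      exact le_trans (le_trans (head_max (hf (n+1)).2 hh p hp) hhx) (ih h' hmem)
  refine ⟨?_, ?_⟩
  · intro n y hxy
    exact eval_eq_bot fun p hp => ne_of_lt (lt_of_le_of_lt (hcoord n p hp) hxy)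
  · set v : ℕ → α := fun n => eval (f n) x with hv
    have hstruct := fun n => exp_struct (hf n) (hcoord n)
    have hvs : ∀ n, v (n + 1) ≤ v n := by
      intro n
      rcases hstruct (n + 1) with ⟨hb, _, _⟩ | ⟨t, hcons, hnb, _⟩
      · rw [hv]; simp only []; rw [hb]; exact bot_le
      · obtain ⟨h', hh'⟩ := hget n
        have hh : (f (n+1))[0]? = some (x, v (n+1)) := by
          rw [hcons]; rfl
        rcases hstruct n with ⟨_, _, hall⟩ | ⟨s, hcons', _, _⟩
        · have hx' : h'.1 < x := hall h' (List.mem_of_getElem? hh')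
          rcases expLt_head (hdesc n) hh hh' with heq | hlt | ⟨heq, _⟩
          · exact absurd hx' (by rw [← heq]; exact lt_irrefl x)
          · exact absurd (lt_trans hlt hx') (lt_irrefl x)
          · exact absurd hx' (heq ▸ lt_irrefl x)
        · have hh2 : (f n)[0]? = some (x, v n) := by rw [hcons']; rfl
          rcases expLt_head (hdesc n) hh hh2 with heq | hlt | ⟨_, hlt⟩
          · exact le_of_eq (congrArg Prod.snd heq)
          · exact absurd hlt (lt_irrefl x)
          · exact le_of_lt hlt
    have hanti : Antitone v := antitone_nat_of_succ_le hvs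
    obtain ⟨m, ⟨N, rfl⟩, hmin⟩ :=
      (wellFounded_lt (α := α)).has_min (Set.range v) ⟨v 0, 0, rfl⟩
    have hconst : ∀ n, N ≤ n → v n = v N :=
      fun n hn => le_antisymm (hanti hn) (not_lt.mp (hmin (v n) ⟨n, rfl⟩))
    have hrv : (Set.range v).Finite := by
      refine Set.Finite.subset ((Set.finite_Iic N).image v) ?_
      rintro a ⟨n, rfl⟩
      rcases le_or_gt n N with hn | hn
      · exact ⟨n, hn, rfl⟩
      · exact ⟨N, Set.self_mem_Iic, (hconst n (le_of_lt hn)).symm⟩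
    have hfun : (fun n => restrictAbove x (f n)) =
        (fun a => if a = ⊥ then ([] : List (X × α)) else [(x, a)]) ∘ v := by
      funext n
      rcases hstruct n with ⟨hb, hr, _⟩ | ⟨t, _, hnb, hr⟩
      · simp [Function.comp, hv, hb, hr]
      · simp [Function.comp, hv, hnb, hr]
    rw [hfun, Set.range_comp]
    exact hrv.image _
end

section
/- Let X be a well-order, let α be a well-order with least element 0_α, and let (f_n) be a strictly descending sequence in α^X. Suppose x ∈ X is the immediate successor of y ∈ X, i.e., x is the least element of X with x >_X y. If the set {f_n^x : n ∈ ℕ} is finite, then the set {f_n^y : n ∈ ℕ} is finite. -/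
variable {X α : Type*}

section Aux

/-- Lexicographic relation on pairs. -/
def plex [LT X] [LT α] (p q : X × α) : Prop :=
  p.1 < q.1 ∨ (p.1 = q.1 ∧ p.2 < q.2)

instance plex_isto [LinearOrder X] [LinearOrder α] :
    IsStrictTotalOrder (X × α) (plex (X := X) (α := α)) where
  trichotomous p q n1 n2 := by
    rcases lt_trichotomy p.1 q.1 with h | h | h
    · exact absurd (Or.inl h) n1
    · rcases lt_trichotomy p.2 q.2 with h2 | h2 | h2
      · exact absurd (Or.inr ⟨h, h2⟩) n1
      · exact Prod.ext h h2
      · exact absurd (Or.inr ⟨h.symm, h2⟩) n2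
    · exact absurd (Or.inl h) n2
  irrefl p := by rintro (h | ⟨-, h⟩) <;> exact lt_irrefl _ h
  trans p q s := by
    rintro (h | ⟨e, h⟩) (h' | ⟨e', h'⟩)
    · exact Or.inl (h.trans h')
    · exact Or.inl (e' ▸ h)
    · exact Or.inl (e ▸ h')
    · exact Or.inr ⟨e.trans e', h.trans h'⟩

lemma lex_of_prefix {β : Type*} {r : β → β → Prop} :
    ∀ {σ τ : List β}, σ <+: τ → σ ≠ τ → List.Lex r σ τ
  | [], [], _, h => absurd rfl h
  | [], _ :: _, _, _ => List.Lex.nil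
  | a :: s, [], hp, _ => by simpa using hp.length_le
  | a :: s, b :: t, hp, hne => by
      rw [List.cons_prefix_cons] at hp
      obtain ⟨rfl, hp⟩ := hp
      exact List.Lex.cons (lex_of_prefix hp (fun h => hne (by rw [h])))

lemma lex_of_get? {β : Type*} {r : β → β → Prop} :
    ∀ (i : ℕ) {σ τ : List β} {p q : β}, σ[i]? = some p → τ[i]? = some q →
      (∀ j, j < i → σ[j]? = τ[j]?) → r p q → List.Lex r σ τ
  | 0, σ, τ, p, q, hp, hq, _, hr => by
      cases σ with
      | nil => simp at hp
      | cons a s =>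
        cases τ with
        | nil => simp at hq
        | cons b t =>
          simp only [List.getElem?_cons_zero] at hp hq
          obtain rfl : a = p := by injection hp
          obtain rfl : b = q := by injection hq
          exact List.Lex.rel hr
  | (i + 1), σ, τ, p, q, hp, hq, hj, hr => by
      cases σ with
      | nil => simp at hp
      | cons a s =>
        cases τ with
        | nil => simp at hq
        | cons b t =>
          obtain rfl : a = b := by
            have := hj 0 (Nat.succ_pos i); simpa using this
          refine List.Lex.cons (lex_of_get? i hp hq (fun j hji => ?_) hr)
          exact hj (j + 1) (Nat.succ_lt_succ hji)

/-- takeWhile preserves (weak) lex order for upward-closed predicates. -/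
lemma lex_takeWhile {β : Type*} {r : β → β → Prop} {P : β → Bool}
    (hP : ∀ p q, r p q → P p = true → P q = true) :
    ∀ {σ τ : List β}, List.Lex r σ τ →
      List.Lex r (σ.takeWhile P) (τ.takeWhile P) ∨ σ.takeWhile P = τ.takeWhile P := by
  intro σ τ h
  induction h with
  | nil =>
    rename_i b t
    rw [List.takeWhile_nil, List.takeWhile_cons]
    cases hb : P b
    · simp
    · exact Or.inl List.Lex.nil
  | @rel p s q t hr =>
    rw [List.takeWhile_cons, List.takeWhile_cons]
    cases hp : P p
    · cases hq : P q
      · simp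
      · exact Or.inl List.Lex.nil
    · rw [hP p q hr hp]
      exact Or.inl (List.Lex.rel hr)
  | @cons p s t h ih =>
    rw [List.takeWhile_cons, List.takeWhile_cons]
    cases hp : P p
    · simp
    · rcases ih with h' | h'
      · exact Or.inl (List.Lex.cons h')
      · exact Or.inr (by rw [h'])

lemma filter_eq_takeWhile [LinearOrder X] [Preorder α] (z : X) :
    ∀ {l : List (X × α)}, l.Pairwise (fun p q => q.1 < p.1) →
      l.filter (fun p => decide (¬ p.1 < z)) = l.takeWhile (fun p => decide (¬ p.1 < z))
  | [], _ => rfl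
  | p :: t, hl => by
      rw [List.pairwise_cons] at hl
      by_cases hp : p.1 < z
      · rw [List.filter_cons_of_neg (p := fun q : X × α => decide (¬ q.1 < z)) (by simpa using hp),
          List.takeWhile_cons_of_neg (p := fun q : X × α => decide (¬ q.1 < z)) (by simpa using hp),
          List.filter_eq_nil_iff.2]
        intro q hq
        have h1 : q.1 < p.1 := hl.1 q hq
        simp [h1.trans hp]
      · rw [List.filter_cons_of_pos (p := fun q : X × α => decide (¬ q.1 < z)) (by simpa using hp),
          List.takeWhile_cons_of_pos (p := fun q : X × α => decide (¬ q.1 < z)) (by simpa using hp),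
          filter_eq_takeWhile z hl.2]

lemma takeWhile_split {β : Type*} {P Q : β → Bool} (h : ∀ a, P a = true → Q a = true) :
    ∀ (l : List β), l.takeWhile Q = l.takeWhile P ++ (l.dropWhile P).takeWhile Q
  | [] => rfl
  | a :: l => by
      cases ha : P a with
      | true =>
        rw [List.takeWhile_cons_of_pos (h a ha), List.takeWhile_cons_of_pos ha,
          List.dropWhile_cons_of_pos ha, List.cons_append, takeWhile_split h l]
      | false =>
        rw [show List.takeWhile P (a :: l) = [] from List.takeWhile_cons_of_neg (by simp [ha]),
          show List.dropWhile P (a :: l) = a :: l from List.dropWhile_cons_of_neg (by simp [ha]),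
          List.nil_append]

lemma dropWhile_head_neg {β : Type*} {P : β → Bool} :
    ∀ {l : List β} {a : β} {r : List β}, l.dropWhile P = a :: r → P a = false
  | [], a, r, h => by simp at h
  | b :: l, a, r, h => by
      by_cases hb : P b = true
      · rw [List.dropWhile_cons_of_pos hb] at h
        exact dropWhile_head_neg h
      · rw [List.dropWhile_cons_of_neg hb] at h
        obtain rfl : b = a := by injection h
        exact Bool.not_eq_true _ ▸ (by simpa using hb)

lemma lex_append_cancel {β : Type*} {r : β → β → Prop} [IsIrrefl β r] :
    ∀ (s : List β) {t₁ t₂ : List β}, List.Lex r (s ++ t₁) (s ++ t₂) → List.Lex r t₁ t₂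
  | [], _, _, h => h
  | a :: s, t₁, t₂, h => by
      rw [List.cons_append, List.cons_append, List.lex_cons_iff] at h
      exact lex_append_cancel s h

end Aux

lemma expLt_lex [LinearOrder X] [LinearOrder α] {σ τ : List (X × α)}
    (h : ExpLt σ τ) : List.Lex plex σ τ := by
  rcases h with ⟨hne, hp⟩ | ⟨i, b, a, b', a', hs, ht, hj, -, hlt⟩
  · exact lex_of_prefix hp hne
  · exact lex_of_get? i hs ht hj hlt

/-- Successor case: if `x` is the immediate successor of `y` in `X` and, for a strictly
descending sequence `(f_n)` in `α^X`, the set `{f_n^x : n ∈ ℕ}` is finite, then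
`{f_n^y : n ∈ ℕ}` is finite. -/
theorem successor_case [LinearOrder X] [WellFoundedLT X]
    [LinearOrder α] [OrderBot α] [WellFoundedLT α]
    (f : ℕ → List (X × α)) (hf : ∀ n, f n ∈ ExpSet X α)
    (hdesc : ∀ n, ExpLt (f (n + 1)) (f n))
    (x y : X) (hyx : y < x) (hsucc : ∀ z : X, y < z → x ≤ z)
    (hfin : (Set.range fun n => restrictAbove x (f n)).Finite) :
    (Set.range fun n => restrictAbove y (f n)).Finite := by
  classical
  haveI : IsTrans (X × α) (fun p q => q.1 < p.1) := ⟨fun _ _ _ h1 h2 => h2.trans h1⟩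
  have hpair : ∀ n, (f n).Pairwise (fun p q => q.1 < p.1) := fun n =>
    List.isChain_iff_pairwise.1 (hf n).2
  set G : ℕ → List (X × α) := fun n => (f n).takeWhile (fun p => decide (¬ p.1 < x)) with hGdef
  set g : ℕ → List (X × α) := fun n => (f n).takeWhile (fun p => decide (¬ p.1 < y)) with hgdef
  have hGr : ∀ n, restrictAbove x (f n) = G n := fun n => filter_eq_takeWhile x (hpair n)
  have hgr : ∀ n, restrictAbove y (f n) = g n := fun n => filter_eq_takeWhile y (hpair n)
  have hfinG : (Set.range G).Finite := by
    rwa [show (fun n => restrictAbove x (f n)) = G from funext hGr] at hfin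
  rw [show (fun n => restrictAbove y (f n)) = g from funext hgr]
  have hLex : ∀ n, List.Lex plex (f (n + 1)) (f n) := fun n => expLt_lex (hdesc n)
  have hmonoP : ∀ (z : X) (p q : X × α), plex p q →
      (decide (¬ p.1 < z) : Bool) = true → (decide (¬ q.1 < z) : Bool) = true := by
    intro z p q hpq hp
    simp only [decide_eq_true_eq] at hp ⊢
    intro hq
    rcases hpq with h | ⟨h, -⟩
    · exact hp (h.trans hq)
    · exact hp (h ▸ hq)
  have hGstep : ∀ n, List.Lex plex (G (n + 1)) (G n) ∨ G (n + 1) = G n :=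
    fun n => lex_takeWhile (hmonoP x) (hLex n)
  have hgstep : ∀ n, List.Lex plex (g (n + 1)) (g n) ∨ g (n + 1) = g n :=
    fun n => lex_takeWhile (hmonoP y) (hLex n)
  have ltrans : ∀ {u v w : List (X × α)}, List.Lex plex u v → List.Lex plex v w →
      List.Lex plex u w := fun h1 h2 => List.lex_trans (fun h h' => IsTrans.trans _ _ _ h h') h1 h2
  have lirr : ∀ u : List (X × α), ¬ List.Lex plex u u :=
    fun u h => (List.Lex.asymm plex).asymm u u h h
  have hGle : ∀ m n, m ≤ n → List.Lex plex (G n) (G m) ∨ G n = G m := by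
    intro m n h
    induction n, h using Nat.le_induction with
    | base => exact Or.inr rfl
    | succ n hmn ih =>
      rcases hGstep n with h1 | h1
      · rcases ih with h2 | h2
        · exact Or.inl (ltrans h1 h2)
        · exact Or.inl (h2 ▸ h1)
      · rw [h1]; exact ih
  have hDfin : {n : ℕ | G (n + 1) ≠ G n}.Finite := by
    by_contra hinf
    have key : ∀ m n, G (m + 1) ≠ G m → m < n → List.Lex plex (G n) (G m) := by
      intro m n hm hmn
      have h1 : List.Lex plex (G (m + 1)) (G m) := (hGstep m).resolve_right hm
      rcases hGle (m + 1) n hmn with h2 | h2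
      · exact ltrans h2 h1
      · rw [h2]; exact h1
    have hinj : Set.InjOn G {n : ℕ | G (n + 1) ≠ G n} := by
      intro m hm n hn heq
      rcases lt_trichotomy m n with h | h | h
      · have := key m n hm h
        rw [heq] at this
        exact absurd this (lirr _)
      · exact h
      · have := key n m hn h
        rw [← heq] at this
        exact absurd this (lirr _)
    exact (Set.Infinite.image hinj hinf) (hfinG.subset (Set.image_subset_range G _))
  obtain ⟨N, hN⟩ := hDfin.bddAbove
  have hGconst : ∀ n, N + 1 ≤ n → G n = G (N + 1) := by
    intro n h
    induction n, h using Nat.le_induction with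
    | base => rfl
    | succ n hn ih =>
      have hnD : G (n + 1) = G n := by
        by_contra hne
        exact absurd (hN hne) (by omega)
      rw [hnD]; exact ih
  set t : ℕ → List (X × α) := fun n =>
    ((f n).dropWhile (fun p => decide (¬ p.1 < x))).takeWhile (fun p => decide (¬ p.1 < y))
    with htdef
  have hPxy : ∀ p : X × α, (decide (¬ p.1 < x) : Bool) = true →
      (decide (¬ p.1 < y) : Bool) = true := by
    intro p hp
    simp only [decide_eq_true_eq] at hp ⊢
    exact fun h => hp (h.trans hyx)
  have hsplit : ∀ n, g n = G n ++ t n := fun n => takeWhile_split hPxy (f n)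
  have hstruct : ∀ n, t n = [] ∨ ∃ c : α, c ≠ ⊥ ∧ t n = [(y, c)] := by
    intro n
    cases hB : (f n).dropWhile (fun p => decide (¬ p.1 < x)) with
    | nil => left; rw [htdef]; simp only; rw [hB]; rfl
    | cons p B' =>
      have hpx : p.1 < x := by
        have := dropWhile_head_neg hB
        simpa using this
      have hple : p.1 ≤ y := by
        by_contra h
        push_neg at h
        exact absurd (hsucc _ h) (not_le.2 hpx)
      have ht : t n = List.takeWhile (fun p : X × α => decide (¬ p.1 < y)) (p :: B') := by
        rw [htdef]; simp only; rw [hB]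
      have hpw : (p :: B').Pairwise (fun p q : X × α => q.1 < p.1) :=
        List.Pairwise.sublist (hB ▸ List.dropWhile_sublist _) (hpair n)
      rcases eq_or_lt_of_le hple with heq | hlt
      · right
        refine ⟨p.2, ?_, ?_⟩
        · have hmem : p ∈ f n :=
            (List.dropWhile_sublist (l := f n) (fun p : X × α => decide (¬ p.1 < x))).mem
              (by rw [hB]; exact List.mem_cons_self)
          exact (hf n).1 p hmem
        · rw [ht, List.takeWhile_cons_of_pos (by simp [heq])]
          have hB' : List.takeWhile (fun p : X × α => decide (¬ p.1 < y)) B' = [] := by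
            cases B' with
            | nil => rfl
            | cons q B'' =>
              have hq : q.1 < p.1 := (List.pairwise_cons.1 hpw).1 q List.mem_cons_self
              rw [List.takeWhile_cons_of_neg (by simp [heq ▸ hq])]
          rw [hB']
          have : p = (y, p.2) := Prod.ext heq rfl
          rw [← this]
      · left
        rw [ht, List.takeWhile_cons_of_neg (by simp [hlt])]
  set a : ℕ → α := fun n => ((t n).head?.map Prod.snd).getD ⊥ with hadef
  have ha_nil : ∀ n, t n = [] → a n = ⊥ := by intro n h; rw [hadef]; simp [h]
  have ha_cons : ∀ n c, t n = [(y, c)] → a n = c := by intro n c h; rw [hadef]; simp [h]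
  have hdet : ∀ m n, G m = G n → a m = a n → g m = g n := by
    intro m n hG ha
    rw [hsplit m, hsplit n, hG]
    congr 1
    rcases hstruct m with hm | ⟨c, hc0, hm⟩ <;> rcases hstruct n with hn | ⟨d, hd0, hn⟩
    · rw [hm, hn]
    · exfalso
      rw [ha_nil m hm, ha_cons n d hn] at ha
      exact hd0 ha.symm
    · exfalso
      rw [ha_cons m c hm, ha_nil n hn] at ha
      exact hc0 ha
    · rw [hm, hn]
      rw [ha_cons m c hm, ha_cons n d hn] at ha
      rw [ha]
  have hastep : ∀ n, N + 1 ≤ n → a (n + 1) ≤ a n := by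
    intro n hn
    have hGn : G (n + 1) = G n := by
      rw [hGconst (n + 1) (by omega), hGconst n hn]
    rcases hgstep n with h | h
    · rw [hsplit (n + 1), hsplit n, hGn] at h
      have h' : List.Lex plex (t (n + 1)) (t n) := lex_append_cancel (G n) h
      rcases hstruct (n + 1) with h1 | ⟨c, -, h1⟩
      · rw [ha_nil _ h1]; exact bot_le
      · rcases hstruct n with h2 | ⟨d, -, h2⟩
        · rw [h1, h2] at h'
          exact absurd h' List.not_lex_nil
        · rw [h1, h2] at h'
          rw [List.lex_singleton_iff] at h'
          rw [ha_cons _ _ h1, ha_cons _ _ h2]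
          rcases h' with h' | ⟨-, h'⟩
          · exact absurd h' (lt_irrefl y)
          · exact h'.le
    · rw [hsplit (n + 1), hsplit n, hGn] at h
      have ht' : t (n + 1) = t n := List.append_cancel_left h
      rw [hadef]; simp only [ht']; exact le_rfl
  have hamono : ∀ m n, N + 1 ≤ m → m ≤ n → a n ≤ a m := by
    intro m n hm h
    induction n, h using Nat.le_induction with
    | base => exact le_rfl
    | succ n hmn ih => exact (hastep n (hm.trans hmn)).trans ih
  obtain ⟨c, ⟨n₀, hn₀, rfl⟩, hmin⟩ := (wellFounded_lt (α := α)).has_min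
    {c | ∃ n, N + 1 ≤ n ∧ a n = c} ⟨a (N + 1), N + 1, le_rfl, rfl⟩
  have hconst : ∀ n, n₀ ≤ n → g n = g n₀ := by
    intro n h
    apply hdet
    · rw [hGconst n (hn₀.trans h), hGconst n₀ hn₀]
    · have h1 : a n ≤ a n₀ := hamono n₀ n hn₀ h
      have h2 : ¬ a n < a n₀ := hmin (a n) ⟨n, hn₀.trans h, rfl⟩
      exact h1.lt_or_eq.resolve_left h2
  apply Set.Finite.subset ((Set.finite_Iic n₀).image g)
  rintro _ ⟨n, rfl⟩
  rcases le_or_gt n n₀ with h | h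
  · exact ⟨n, Set.mem_Iic.2 h, rfl⟩
  · exact ⟨n₀, Set.mem_Iic.2 le_rfl, (hconst n h.le).symm⟩
end
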